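/- Let h > 0 be a real number, N ≥ 1 a natural number, and p ≥ 3 a real number. Let u : ℤ → ℝ satisfy u_k ≥ 0 and u_k ≤ u_{k+1} for all k ∈ ℤ. If for every integer k with 0 ≤ k ≤ N−1 one has u_k^{p−3}·(u_{k+1} − u_k)/h ≥ (p−2)·u_{k+2}^{p−3}·((k+2)·h)^{p−3}, then h·Σ_{k=0}^{N−1} u_k^p − (h·Σ_{k=0}^{N−1} u_{k−1})^{p−1} ≥ u_0^{p−2}·(u_0 − (p−1)·h^{p−2}) · h·Σ_{k=0}^{N−1} u_{k−1}. -/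

import Mathlib

open Real Finset

private lemma rpow_succ_aux {x : ℝ} (hx : 0 ≤ x) {q : ℝ} (hq : q ≠ 0) :
    x ^ (q - 1) * x = x ^ q := by
  rcases hx.eq_or_lt with hx0 | hx0
  · rw [← hx0, Real.zero_rpow hq, mul_zero]
  · rw [← Real.rpow_add_one hx0.ne' (q - 1), sub_add_cancel]

private lemma upper_cvx {q x y : ℝ} (hq : 1 ≤ q) (hy : 0 ≤ y) (hxy : y ≤ x) :
    x ^ q - y ^ q ≤ q * x ^ (q - 1) * (x - y) := by
  have hx : 0 ≤ x := hy.trans hxy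
  rcases hx.eq_or_lt with hx0 | hx0
  · have hy0 : y = 0 := le_antisymm (hx0 ▸ hxy) hy
    have hq0 : q ≠ 0 := by linarith
    rw [← hx0, hy0, Real.zero_rpow hq0]
    simp
  · have hs : (-1 : ℝ) ≤ (y - x) / x := by
      rw [le_div_iff₀ hx0]; linarith
    have hb := one_add_mul_self_le_rpow_one_add hs hq
    have h1 : (1 : ℝ) + (y - x) / x = y / x := by field_simp; ring
    rw [h1, Real.div_rpow hy hx0.le] at hb
    have hxq : 0 < x ^ q := Real.rpow_pos_of_pos hx0 q
    have hb2 : (1 + q * ((y - x) / x)) * x ^ q ≤ y ^ q := by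
      rw [← le_div_iff₀ hxq]; exact hb
    have hxq1 : x ^ (q - 1) * x = x ^ q := rpow_succ_aux hx0.le (by linarith)
    have expand : (1 + q * ((y - x) / x)) * x ^ q = x ^ q + q * x ^ (q - 1) * (y - x) := by
      rw [← hxq1]; field_simp
    rw [expand] at hb2
    linarith

private lemma lower_cvx {q x y : ℝ} (hq : 1 < q) (hy : 0 ≤ y) (hxy : y ≤ x) :
    q * y ^ (q - 1) * (x - y) ≤ x ^ q - y ^ q := by
  rcases hy.eq_or_lt with hy0 | hy0
  · rw [← hy0, Real.zero_rpow (by linarith : q - 1 ≠ 0),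
      Real.zero_rpow (by linarith : q ≠ 0)]
    have : 0 ≤ x ^ q := Real.rpow_nonneg (hy0 ▸ hxy : (0:ℝ) ≤ x) q
    simp; linarith
  · have hs : (-1 : ℝ) ≤ (x - y) / y := by
      rw [le_div_iff₀ hy0]; linarith
    have hb := one_add_mul_self_le_rpow_one_add hs hq.le
    have h1 : (1 : ℝ) + (x - y) / y = x / y := by field_simp; ring
    rw [h1, Real.div_rpow (hy.trans hxy) hy0.le] at hb
    have hyq : 0 < y ^ q := Real.rpow_pos_of_pos hy0 q
    have hb2 : (1 + q * ((x - y) / y)) * y ^ q ≤ x ^ q := by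
      rw [← le_div_iff₀ hyq]; exact hb
    have hyq1 : y ^ (q - 1) * y = y ^ q := rpow_succ_aux hy0.le (by linarith)
    have expand : (1 + q * ((x - y) / y)) * y ^ q = y ^ q + q * y ^ (q - 1) * (x - y) := by
      rw [← hyq1]; field_simp
    rw [expand] at hb2
    linarith

private noncomputable def Aseq (h : ℝ) (u : ℤ → ℝ) (n : ℕ) : ℝ :=
  h * ∑ k ∈ Finset.range n, u ((k : ℤ) - 1)

theorem qi_time_scale_hZ_thm33
    (h : ℝ) (hh : 0 < h) (N : ℕ) (hN : 1 ≤ N) (p : ℝ) (hp : 3 ≤ p)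
    (u : ℤ → ℝ)
    (hnonneg : ∀ k : ℤ, 0 ≤ u k)
    (hmono : ∀ k : ℤ, u k ≤ u (k + 1))
    (hyp : ∀ k : ℤ, 0 ≤ k → k ≤ (N : ℤ) - 1 →
      (p - 2) * u (k + 2) ^ (p - 3) * (((k : ℝ) + 2) * h) ^ (p - 3) ≤
        u k ^ (p - 3) * (u (k + 1) - u k) / h) :
    h * ∑ k ∈ Finset.range N, u (k : ℤ) ^ p -
        (h * ∑ k ∈ Finset.range N, u ((k : ℤ) - 1)) ^ (p - 1) ≥
      u 0 ^ (p - 2) * (u 0 - (p - 1) * h ^ (p - 2)) *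
        (h * ∑ k ∈ Finset.range N, u ((k : ℤ) - 1)) := by
  set C := u 0 ^ (p - 2) * (u 0 - (p - 1) * h ^ (p - 2)) with hC
  have umono : Monotone u := monotone_int_of_le_succ hmono
  have hp1 : (1 : ℝ) < p - 1 := by linarith
  have hp2 : (1 : ℝ) ≤ p - 2 := by linarith
  have hAnn : ∀ n : ℕ, 0 ≤ Aseq h u n := fun n =>
    mul_nonneg hh.le (Finset.sum_nonneg fun k _ => hnonneg _)
  have hAsucc : ∀ n : ℕ, Aseq h u (n + 1) = Aseq h u n + h * u ((n : ℤ) - 1) := by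
    intro n; simp [Aseq, Finset.sum_range_succ, mul_add]
  have hAmono : ∀ n : ℕ, Aseq h u n ≤ Aseq h u (n + 1) := by
    intro n
    have := mul_nonneg hh.le (hnonneg ((n : ℤ) - 1))
    rw [hAsucc]; linarith
  have hupow3 : ∀ k : ℤ, u k ^ (p - 3) * u k = u k ^ (p - 2) := by
    intro k
    have e : p - 2 - 1 = p - 3 := by ring
    rw [← e]; exact rpow_succ_aux (hnonneg k) (by linarith)
  have hupow2 : ∀ k : ℤ, u k ^ (p - 2) * u k = u k ^ (p - 1) := by
    intro k
    have e : p - 1 - 1 = p - 2 := by ring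
    rw [← e]; exact rpow_succ_aux (hnonneg k) (by linarith)
  have hupow1 : ∀ k : ℤ, u k ^ (p - 1) * u k = u k ^ p := fun k =>
    rpow_succ_aux (hnonneg k) (by linarith)
  have hAbound : ∀ n : ℕ, Aseq h u (n + 1 + 1) ≤ ((n : ℝ) + 2) * h * u ((n : ℤ) + 2) := by
    intro n
    have hterm : ∀ k ∈ Finset.range (n + 1 + 1), u ((k : ℤ) - 1) ≤ u ((n : ℤ) + 2) := by
      intro k hk
      apply umono
      have := Finset.mem_range.mp hk
      omega
    have h1 : Aseq h u (n + 1 + 1) ≤ h * ∑ _k ∈ Finset.range (n + 1 + 1), u ((n : ℤ) + 2) :=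
      mul_le_mul_of_nonneg_left (Finset.sum_le_sum hterm) hh.le
    calc Aseq h u (n + 1 + 1) ≤ h * ∑ _k ∈ Finset.range (n + 1 + 1), u ((n : ℤ) + 2) := h1
      _ = ((n : ℝ) + 2) * h * u ((n : ℤ) + 2) := by
          rw [Finset.sum_const, Finset.card_range]; push_cast; ring
  have gstep : ∀ n : ℕ, (n : ℤ) ≤ (N : ℤ) - 1 →
      u (n : ℤ) ^ (p - 1) - (p - 1) * Aseq h u (n + 1) ^ (p - 2) ≤
      u ((n : ℤ) + 1) ^ (p - 1) - (p - 1) * Aseq h u (n + 1 + 1) ^ (p - 2) := by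
    intro n hnN
    have c1 : (p - 1) * u (n : ℤ) ^ (p - 2) * (u ((n : ℤ) + 1) - u (n : ℤ)) ≤
        u ((n : ℤ) + 1) ^ (p - 1) - u (n : ℤ) ^ (p - 1) := by
      have := lower_cvx hp1 (hnonneg (n : ℤ)) (hmono (n : ℤ))
      have e : p - 1 - 1 = p - 2 := by ring
      rwa [e] at this
    have c2 : Aseq h u (n + 1 + 1) ^ (p - 2) - Aseq h u (n + 1) ^ (p - 2) ≤
        (p - 2) * Aseq h u (n + 1 + 1) ^ (p - 3) * (h * u (n : ℤ)) := by
      have hcv := upper_cvx hp2 (hAnn (n + 1)) (hAmono (n + 1))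
      have e : p - 2 - 1 = p - 3 := by ring
      rw [e] at hcv
      have e2 : Aseq h u (n + 1 + 1) - Aseq h u (n + 1) = h * u (n : ℤ) := by
        rw [hAsucc (n + 1)]
        push_cast
        ring_nf
      rwa [e2] at hcv
    have c3 : Aseq h u (n + 1 + 1) ^ (p - 3) ≤
        (((n : ℝ) + 2) * h) ^ (p - 3) * u ((n : ℤ) + 2) ^ (p - 3) := by
      have hnn : (0 : ℝ) ≤ ((n : ℝ) + 2) * h := by positivity
      calc Aseq h u (n + 1 + 1) ^ (p - 3)
          ≤ (((n : ℝ) + 2) * h * u ((n : ℤ) + 2)) ^ (p - 3) :=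
            Real.rpow_le_rpow (hAnn _) (hAbound n) (by linarith)
        _ = _ := Real.mul_rpow hnn (hnonneg _)
    have c4 := hyp (n : ℤ) (Int.natCast_nonneg n) hnN
    push_cast at c4
    have c5 : (p - 2) * Aseq h u (n + 1 + 1) ^ (p - 3) ≤
        u (n : ℤ) ^ (p - 3) * (u ((n : ℤ) + 1) - u (n : ℤ)) / h := by
      calc (p - 2) * Aseq h u (n + 1 + 1) ^ (p - 3)
          ≤ (p - 2) * ((((n : ℝ) + 2) * h) ^ (p - 3) * u ((n : ℤ) + 2) ^ (p - 3)) :=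
            mul_le_mul_of_nonneg_left c3 (by linarith)
        _ = (p - 2) * u ((n : ℤ) + 2) ^ (p - 3) * (((n : ℝ) + 2) * h) ^ (p - 3) := by ring
        _ ≤ _ := c4
    have c6 : (p - 2) * Aseq h u (n + 1 + 1) ^ (p - 3) * (h * u (n : ℤ)) ≤
        u (n : ℤ) ^ (p - 2) * (u ((n : ℤ) + 1) - u (n : ℤ)) := by
      have hnn : (0 : ℝ) ≤ h * u (n : ℤ) := mul_nonneg hh.le (hnonneg _)
      have hmm := mul_le_mul_of_nonneg_right c5 hnn
      calc (p - 2) * Aseq h u (n + 1 + 1) ^ (p - 3) * (h * u (n : ℤ))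
          ≤ u (n : ℤ) ^ (p - 3) * (u ((n : ℤ) + 1) - u (n : ℤ)) / h * (h * u (n : ℤ)) := hmm
        _ = u (n : ℤ) ^ (p - 3) * u (n : ℤ) * (u ((n : ℤ) + 1) - u (n : ℤ)) := by
            field_simp
        _ = u (n : ℤ) ^ (p - 2) * (u ((n : ℤ) + 1) - u (n : ℤ)) := by rw [hupow3]
    have c7 := mul_le_mul_of_nonneg_left c2 (by linarith : (0 : ℝ) ≤ p - 1)
    have c8 := mul_le_mul_of_nonneg_left c6 (by linarith : (0 : ℝ) ≤ p - 1)
    nlinarith [c1, c7, c8]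
  have gC : ∀ n : ℕ, n < N →
      C ≤ u (n : ℤ) ^ (p - 1) - (p - 1) * Aseq h u (n + 1) ^ (p - 2) := by
    intro n
    induction n with
    | zero =>
      intro _
      have hA1 : Aseq h u 1 = h * u (-1) := by simp [Aseq]
      have hA1le : Aseq h u 1 ≤ h * u 0 := by
        rw [hA1]
        exact mul_le_mul_of_nonneg_left (umono (by norm_num : (-1 : ℤ) ≤ 0)) hh.le
      have hA1p : Aseq h u 1 ^ (p - 2) ≤ h ^ (p - 2) * u 0 ^ (p - 2) := by
        calc Aseq h u 1 ^ (p - 2) ≤ (h * u 0) ^ (p - 2) :=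
              Real.rpow_le_rpow (hAnn 1) hA1le (by linarith)
          _ = _ := Real.mul_rpow hh.le (hnonneg 0)
      have hu01 : u 0 ^ (p - 2) * u 0 = u 0 ^ (p - 1) := hupow2 0
      have hm := mul_le_mul_of_nonneg_left hA1p (by linarith : (0 : ℝ) ≤ p - 1)
      have e0 : ((0 : ℕ) : ℤ) = (0 : ℤ) := by norm_num
      rw [e0, hC]
      nlinarith [hm, hu01]
    | succ m ih =>
      intro hm
      have h1 : m < N := by omega
      have h2 : (m : ℤ) ≤ (N : ℤ) - 1 := by omega
      have key := (ih h1).trans (gstep m h2)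
      have e : ((m + 1 : ℕ) : ℤ) = (m : ℤ) + 1 := by push_cast; ring
      rw [e]
      exact key
  have Fmain : ∀ n : ℕ, n ≤ N →
      C * Aseq h u n ≤ h * ∑ k ∈ Finset.range n, u (k : ℤ) ^ p - Aseq h u n ^ (p - 1) := by
    intro n
    induction n with
    | zero =>
      intro _
      have hA0 : Aseq h u 0 = 0 := by simp [Aseq]
      rw [hA0, Real.zero_rpow (by linarith : p - 1 ≠ 0)]
      simp
    | succ m ih =>
      intro hm
      have hmN : m < N := by omega
      have ihm := ih (by omega)
      have d0 : Aseq h u (m + 1) = Aseq h u m + h * u ((m : ℤ) - 1) := hAsucc m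
      have d1 : Aseq h u (m + 1) ^ (p - 1) - Aseq h u m ^ (p - 1) ≤
          (p - 1) * Aseq h u (m + 1) ^ (p - 2) * (h * u ((m : ℤ) - 1)) := by
        have hcv := upper_cvx (le_of_lt hp1) (hAnn m) (hAmono m)
        have e : p - 1 - 1 = p - 2 := by ring
        rw [e] at hcv
        have e2 : Aseq h u (m + 1) - Aseq h u m = h * u ((m : ℤ) - 1) := by rw [d0]; ring
        rwa [e2] at hcv
      have d2 : h * u ((m : ℤ) - 1) * u (m : ℤ) ^ (p - 1) ≤ h * u (m : ℤ) ^ p := by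
        have hnn : (0 : ℝ) ≤ h * u (m : ℤ) ^ (p - 1) :=
          mul_nonneg hh.le (Real.rpow_nonneg (hnonneg _) _)
        calc h * u ((m : ℤ) - 1) * u (m : ℤ) ^ (p - 1)
            = h * u (m : ℤ) ^ (p - 1) * u ((m : ℤ) - 1) := by ring
          _ ≤ h * u (m : ℤ) ^ (p - 1) * u (m : ℤ) :=
              mul_le_mul_of_nonneg_left (umono (by omega : (m : ℤ) - 1 ≤ (m : ℤ))) hnn
          _ = h * u (m : ℤ) ^ p := by rw [mul_assoc, hupow1]
      have d3 := gC m hmN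
      have d4 := mul_le_mul_of_nonneg_left d3
        (mul_nonneg hh.le (hnonneg ((m : ℤ) - 1)))
      have d5 : C * Aseq h u (m + 1) = C * Aseq h u m + C * (h * u ((m : ℤ) - 1)) := by
        rw [d0]; ring
      have hsum : h * ∑ k ∈ Finset.range (m + 1), u (k : ℤ) ^ p =
          h * ∑ k ∈ Finset.range m, u (k : ℤ) ^ p + h * u (m : ℤ) ^ p := by
        rw [Finset.sum_range_succ]; ring
      rw [hsum, d5]
      nlinarith [ihm, d1, d2, d4]
  have final := Fmain N le_rfl
  simp only [Aseq] at final
  exact final
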